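/- Let D₁, D₂, D₃ be closed balls in ℝᵈ (d ≥ 2) with D = D₁ ∩ D₂ ∩ D₃ ≠ ∅, and fix a coordinate index i. Let p ∈ D minimize π_i over D. Then at least one of the following holds: (1) p = c_k − r_k e_i for some k ∈ {1,2,3} (p is a pole of one of the spheres ∂D_k); (2) p lies on the intersection of exactly two boundary spheres ∂D_j ∩ ∂D_k and minimizes π_i over D_j ∩ D_k; (3) p ∈ ∂D₁ ∩ ∂D₂ ∩ ∂D₃. -/

import Mathlib

open Metric EuclideanSpace

lemma pole_aux {d : ℕ} (c : EuclideanSpace ℝ (Fin d)) (r : ℝ) (hr : 0 < r) (i : Fin d)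
    (p : EuclideanSpace ℝ (Fin d)) (hp : p ∈ closedBall c r)
    (hmin : ∀ x ∈ closedBall c r, p i ≤ x i) :
    p = c - r • EuclideanSpace.single i (1 : ℝ) := by
  have hq : c - r • EuclideanSpace.single i (1:ℝ) ∈ closedBall c r := by
    simp [mem_closedBall, dist_eq_norm, sub_sub_cancel_left, norm_smul,
      EuclideanSpace.norm_single, abs_of_pos hr]
  have hqi : (c - r • EuclideanSpace.single i (1:ℝ)) i = c i - r := by
    simp [PiLp.sub_apply, PiLp.smul_apply, EuclideanSpace.single_apply]
  have hub : p i ≤ c i - r := by have := hmin _ hq; rwa [hqi] at this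
  have hdist : dist p c ^ 2 = ∑ j, (p j - c j)^2 := by
    rw [EuclideanSpace.dist_eq, Real.sq_sqrt (by positivity)]
    simp [Real.dist_eq, sq_abs]
  have hdr : dist p c ≤ r := mem_closedBall.1 hp
  have hsum : ∑ j, (p j - c j)^2 ≤ r^2 := by
    rw [← hdist]; nlinarith [dist_nonneg (x := p) (y := c)]
  have hterm : (p i - c i)^2 ≤ ∑ j, (p j - c j)^2 :=
    Finset.single_le_sum (f := fun j => (p j - c j)^2) (fun j _ => sq_nonneg _) (Finset.mem_univ i)
  have hlb : c i - r ≤ p i := by nlinarith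
  have hpi : p i = c i - r := le_antisymm hub hlb
  have hii : (p i - c i)^2 = r^2 := by rw [hpi]; ring
  have hrest : ∑ j ∈ Finset.univ.erase i, (p j - c j)^2 = 0 := by
    have heq := Finset.add_sum_erase Finset.univ (fun j => (p j - c j)^2) (Finset.mem_univ i)
    simp only at heq
    have h0 : (0:ℝ) ≤ ∑ j ∈ Finset.univ.erase i, (p j - c j)^2 :=
      Finset.sum_nonneg fun j _ => sq_nonneg _
    nlinarith [heq]
  have hzero : ∀ j ∈ Finset.univ.erase i, (p j - c j)^2 = 0 :=
    (Finset.sum_eq_zero_iff_of_nonneg (fun j _ => sq_nonneg _)).1 hrest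
  ext j
  by_cases hj : j = i
  · subst hj
    simp [PiLp.sub_apply, PiLp.smul_apply, EuclideanSpace.single_apply, hpi]
  · have := hzero j (Finset.mem_erase.2 ⟨hj, Finset.mem_univ j⟩)
    have : p j = c j := by nlinarith
    simp [PiLp.sub_apply, PiLp.smul_apply, EuclideanSpace.single_apply, hj, this]
open Metric EuclideanSpace

lemma reduce_aux {d : ℕ} (c : Fin 3 → EuclideanSpace ℝ (Fin d)) (r : Fin 3 → ℝ)
    (i : Fin d) (p : EuclideanSpace ℝ (Fin d)) (P : Fin 3 → Prop) (m : Fin 3)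
    (hm : P m) (hpm : p ∈ ball (c m) (r m))
    (hpk : ∀ k, P k → k ≠ m → p ∈ closedBall (c k) (r k))
    (hmin : ∀ x, (∀ k, P k → x ∈ closedBall (c k) (r k)) → p i ≤ x i) :
    ∀ x, (∀ k, P k → k ≠ m → x ∈ closedBall (c k) (r k)) → p i ≤ x i := by
  intro x hx
  by_contra hlt
  push_neg at hlt
  have hxp : x ≠ p := fun h => absurd (h ▸ hlt) (lt_irrefl _)
  have hnorm : 0 < ‖x - p‖ := by
    rw [norm_pos_iff, sub_ne_zero]; exact hxp
  set ε : ℝ := r m - dist p (c m) with hε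
  have hεpos : 0 < ε := by
    have := mem_ball.1 hpm; rw [hε]; linarith
  set t : ℝ := min 1 (ε / (2 * ‖x - p‖)) with ht
  have htpos : 0 < t := lt_min one_pos (by positivity)
  have ht1 : t ≤ 1 := min_le_left _ _
  set y : EuclideanSpace ℝ (Fin d) := (1 - t) • p + t • x with hy
  have hyp : dist y p ≤ ε / 2 := by
    have : y - p = t • (x - p) := by
      rw [hy]; module
    rw [dist_eq_norm, this, norm_smul, Real.norm_eq_abs, abs_of_pos htpos]
    have : t ≤ ε / (2 * ‖x - p‖) := min_le_right _ _
    calc t * ‖x - p‖ ≤ ε / (2 * ‖x - p‖) * ‖x - p‖ := by nlinarith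
      _ = ε / 2 := by field_simp
  have hym : y ∈ closedBall (c m) (r m) := by
    rw [mem_closedBall]
    calc dist y (c m) ≤ dist y p + dist p (c m) := dist_triangle _ _ _
      _ ≤ ε / 2 + dist p (c m) := by linarith
      _ ≤ r m := by dsimp [hε] at *; linarith
  have hyk : ∀ k, P k → y ∈ closedBall (c k) (r k) := by
    intro k hk
    by_cases hkm : k = m
    · exact hkm ▸ hym
    · exact (convex_closedBall (c k) (r k)) (hpk k hk hkm) (hx k hk hkm)
        (by linarith) (le_of_lt htpos) (by ring)
  have := hmin y hyk
  have hyi : y i = (1 - t) * p i + t * x i := by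
    simp [hy, PiLp.add_apply, PiLp.smul_apply, smul_eq_mul]
  rw [hyi] at this
  nlinarith

lemma fin3_cases (k : Fin 3) : k = 0 ∨ k = 1 ∨ k = 2 := by
  fin_cases k <;> simp


theorem stmt_19 {d : ℕ} (hd : 2 ≤ d) (c : Fin 3 → EuclideanSpace ℝ (Fin d))
    (r : Fin 3 → ℝ) (hr : ∀ k, 0 < r k)
    (hD : (⋂ k, closedBall (c k) (r k)).Nonempty)
    (i : Fin d) (p : EuclideanSpace ℝ (Fin d))
    (hp : p ∈ ⋂ k, closedBall (c k) (r k))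
    (hmin : ∀ x ∈ ⋂ k, closedBall (c k) (r k), p i ≤ x i) :
    (∃ k, p = c k - r k • EuclideanSpace.single i (1 : ℝ)) ∨
    (∃ j k, j ≠ k ∧ p ∈ sphere (c j) (r j) ∩ sphere (c k) (r k) ∧
      ∀ x ∈ closedBall (c j) (r j) ∩ closedBall (c k) (r k), p i ≤ x i) ∨
    (∀ k, p ∈ sphere (c k) (r k)) := by
  simp only [Set.mem_iInter] at hp
  have hmin' : ∀ x, (∀ k, x ∈ closedBall (c k) (r k)) → p i ≤ x i :=
    fun x hx => hmin x (Set.mem_iInter.2 hx)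
  have hball : ∀ k, p ∉ sphere (c k) (r k) → p ∈ ball (c k) (r k) :=
    fun k hk => mem_ball.2 (lt_of_le_of_ne (mem_closedBall.1 (hp k)) (fun h => hk h))
  have key : ∀ m : Fin 3, p ∈ ball (c m) (r m) →
      ∀ x, (∀ k, k ≠ m → x ∈ closedBall (c k) (r k)) → p i ≤ x i := by
    intro m hbm
    have := reduce_aux c r i p (fun _ => True) m trivial hbm (fun k _ _ => hp k)
      (fun x hx => hmin' x (fun k => hx k trivial))
    exact fun x hx => this x (fun k _ hk => hx k hk)
  have key2 : ∀ m1 m2 : Fin 3, m1 ≠ m2 → p ∈ ball (c m1) (r m1) → p ∈ ball (c m2) (r m2) →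
      ∀ x, (∀ k, k ≠ m1 → k ≠ m2 → x ∈ closedBall (c k) (r k)) → p i ≤ x i := by
    intro m1 m2 h12 hb1 hb2
    exact reduce_aux c r i p (fun k => k ≠ m1) m2 (Ne.symm h12) hb2 (fun k _ _ => hp k)
      (fun x hx => key m1 hb1 x hx)
  by_cases h0 : p ∈ sphere (c 0) (r 0) <;>
  by_cases h1 : p ∈ sphere (c 1) (r 1) <;>
  by_cases h2 : p ∈ sphere (c 2) (r 2)
  · right; right; intro k; fin_cases k <;> assumption
  · right; left
    refine ⟨0, 1, by decide, ⟨h0, h1⟩, fun x hx => ?_⟩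
    obtain ⟨hxj, hxk⟩ := hx
    refine key 2 (hball 2 h2) x fun k' hk' => ?_
    rcases fin3_cases k' with rfl|rfl|rfl
    exacts [hxj, hxk, absurd rfl hk']
  · right; left
    refine ⟨0, 2, by decide, ⟨h0, h2⟩, fun x hx => ?_⟩
    obtain ⟨hxj, hxk⟩ := hx
    refine key 1 (hball 1 h1) x fun k' hk' => ?_
    rcases fin3_cases k' with rfl|rfl|rfl
    exacts [hxj, absurd rfl hk', hxk]
  · left
    refine ⟨0, pole_aux (c 0) (r 0) (hr 0) i p (hp 0) (fun x hx => ?_)⟩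
    refine key2 1 2 (by decide) (hball 1 h1) (hball 2 h2) x fun k hk1 hk2 => ?_
    rcases fin3_cases k with rfl|rfl|rfl
    exacts [hx, absurd rfl hk1, absurd rfl hk2]
  · right; left
    refine ⟨1, 2, by decide, ⟨h1, h2⟩, fun x hx => ?_⟩
    obtain ⟨hxj, hxk⟩ := hx
    refine key 0 (hball 0 h0) x fun k' hk' => ?_
    rcases fin3_cases k' with rfl|rfl|rfl
    exacts [absurd rfl hk', hxj, hxk]
  · left
    refine ⟨1, pole_aux (c 1) (r 1) (hr 1) i p (hp 1) (fun x hx => ?_)⟩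
    refine key2 0 2 (by decide) (hball 0 h0) (hball 2 h2) x fun k hk1 hk2 => ?_
    rcases fin3_cases k with rfl|rfl|rfl
    exacts [absurd rfl hk1, hx, absurd rfl hk2]
  · left
    refine ⟨2, pole_aux (c 2) (r 2) (hr 2) i p (hp 2) (fun x hx => ?_)⟩
    refine key2 0 1 (by decide) (hball 0 h0) (hball 1 h1) x fun k hk1 hk2 => ?_
    rcases fin3_cases k with rfl|rfl|rfl
    exacts [absurd rfl hk1, absurd rfl hk2, hx]
  · exfalso
    have key3 := reduce_aux c r i p (fun k => k ≠ 0 ∧ k ≠ 1) 2 (by decide)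
      (hball 2 h2) (fun k _ _ => hp k)
      (fun x hx => key2 0 1 (by decide) (hball 0 h0) (hball 1 h1) x
        (fun k hk0 hk1 => hx k ⟨hk0, hk1⟩))
    have hcon := key3 (p - EuclideanSpace.single i 1) fun k hk hk2 => by
      rcases fin3_cases k with rfl|rfl|rfl
      exacts [absurd rfl hk.1, absurd rfl hk.2, absurd rfl hk2]
    have hxi : (p - EuclideanSpace.single i (1:ℝ)) i = p i - 1 := by
      simp [PiLp.sub_apply, EuclideanSpace.single_apply]
    rw [hxi] at hcon
    linarith
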